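/- Let Y ∈ ℂ^{m×m} be Hermitian and Z ∈ ℂ^{m×k} be any complex matrix. Then for every n with 1 ≤ n ≤ m, λ_n(Y + Z·Zᴴ) ≥ λ_n(Y), and for every n with k < n ≤ m, λ_n(Y + Z·Zᴴ) ≤ λ_{n−k}(Y). -/

import Mathlib

open Matrix

noncomputable def nthLargest {m : ℕ} (f : Fin m → ℝ) (n : ℕ) : ℝ :=
  if h : 1 ≤ n ∧ n ≤ m then (f ∘ Tuple.sort f) ⟨m - n, by omega⟩ else 0

noncomputable def nthEig {m : ℕ} (Y : Matrix (Fin m) (Fin m) ℂ) (hY : Y.IsHermitian) (n : ℕ) : ℝ :=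
  nthLargest hY.eigenvalues n

/-- The `n`-th largest singular value (1-based) of a complex matrix, equal to the square root
of the `n`-th largest eigenvalue of `A * Aᴴ`, with the convention that it is `0` whenever
`n` exceeds the matrix dimensions. -/
noncomputable def singVal {r c : ℕ} (A : Matrix (Fin r) (Fin c) ℂ) (n : ℕ) : ℝ :=
  Real.sqrt (nthLargest (Matrix.isHermitian_mul_conjTranspose_self A).eigenvalues n)


open Submodule Finset

variable {m k : ℕ}

lemma eigvec_apply {A : Matrix (Fin m) (Fin m) ℂ} (hA : A.IsHermitian) (j : Fin m) :
    Matrix.toEuclideanLin A (hA.eigenvectorBasis j)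
      = ((hA.eigenvalues j : ℂ)) • hA.eigenvectorBasis j := by
  apply (WithLp.equiv 2 (Fin m → ℂ)).injective
  ext i
  have h := congrFun (hA.mulVec_eigenvectorBasis j) i
  simpa [Matrix.toEuclideanLin_apply, Pi.smul_apply, Complex.real_smul] using h

lemma ray_repr {A : Matrix (Fin m) (Fin m) ℂ} (hA : A.IsHermitian) (s : Finset (Fin m))
    (x : EuclideanSpace ℂ (Fin m))
    (hx : x ∈ span ℂ (hA.eigenvectorBasis '' ↑s)) :
    ∃ f : Fin m → ℂ,
      RCLike.re (inner ℂ x (Matrix.toEuclideanLin A x) : ℂ)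
          = ∑ i ∈ s, hA.eigenvalues i * ‖f i‖ ^ 2 ∧
      ‖x‖ ^ 2 = ∑ i ∈ s, ‖f i‖ ^ 2 := by
  classical
  set b := hA.eigenvectorBasis with hb
  have hinj : Function.Injective b := b.orthonormal.linearIndependent.injective
  have hcoe : (↑(s.image b) : Set (EuclideanSpace ℂ (Fin m))) = b '' ↑s := by
    simp [Finset.coe_image]
  rw [← hcoe] at hx
  obtain ⟨g, hg⟩ := mem_span_finset.1 hx
  set f : Fin m → ℂ := g ∘ b with hf
  have hxe : x = ∑ i ∈ s, f i • b i := by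
    rw [← hg.2, Finset.sum_image (fun i _ j _ h => hinj h)]; rfl
  have hTx : Matrix.toEuclideanLin A x = ∑ i ∈ s, (f i * (hA.eigenvalues i : ℂ)) • b i := by
    rw [hxe, map_sum]
    refine Finset.sum_congr rfl fun i _ => ?_
    rw [_root_.map_smul, eigvec_apply hA i, smul_smul]
  have hterm : ∀ (a : ℂ) (c : ℝ), ((starRingEnd ℂ) a * (a * (c:ℂ))).re = c * ‖a‖ ^ 2 := by
    intro a c
    have : (starRingEnd ℂ) a * (a * (c:ℂ)) = ((‖a‖^2 * c : ℝ) : ℂ) := by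
      rw [← mul_assoc, Complex.conj_mul']
      push_cast
      ring
    rw [this, Complex.ofReal_re]; ring
  refine ⟨f, ?_, ?_⟩
  · rw [hTx]
    nth_rewrite 1 [hxe]
    rw [b.orthonormal.inner_sum f (fun i => f i * (hA.eigenvalues i : ℂ)) s]
    rw [RCLike.re_to_complex, Complex.re_sum]
    exact Finset.sum_congr rfl fun i _ => hterm _ _
  · have h1 : (‖x‖ : ℝ) ^ 2 = RCLike.re (inner ℂ x x : ℂ) := (inner_self_eq_norm_sq x).symm
    rw [h1]
    nth_rewrite 1 [hxe]; nth_rewrite 1 [hxe]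
    rw [b.orthonormal.inner_sum f f s, RCLike.re_to_complex, Complex.re_sum]
    refine Finset.sum_congr rfl fun i _ => ?_
    have := hterm (f i) 1
    simpa using this

lemma ray_ge {A : Matrix (Fin m) (Fin m) ℂ} (hA : A.IsHermitian) (s : Finset (Fin m))
    (c : ℝ) (hc : ∀ i ∈ s, c ≤ hA.eigenvalues i) (x : EuclideanSpace ℂ (Fin m))
    (hx : x ∈ span ℂ (hA.eigenvectorBasis '' ↑s)) :
    c * ‖x‖ ^ 2 ≤ RCLike.re (inner ℂ x (Matrix.toEuclideanLin A x) : ℂ) := by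
  obtain ⟨f, h1, h2⟩ := ray_repr hA s x hx
  rw [h1, h2, Finset.mul_sum]
  exact Finset.sum_le_sum fun i hi => mul_le_mul_of_nonneg_right (hc i hi) (by positivity)

lemma ray_le {A : Matrix (Fin m) (Fin m) ℂ} (hA : A.IsHermitian) (s : Finset (Fin m))
    (c : ℝ) (hc : ∀ i ∈ s, hA.eigenvalues i ≤ c) (x : EuclideanSpace ℂ (Fin m))
    (hx : x ∈ span ℂ (hA.eigenvectorBasis '' ↑s)) :
    RCLike.re (inner ℂ x (Matrix.toEuclideanLin A x) : ℂ) ≤ c * ‖x‖ ^ 2 := by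
  obtain ⟨f, h1, h2⟩ := ray_repr hA s x hx
  rw [h1, h2, Finset.mul_sum]
  exact Finset.sum_le_sum fun i hi => mul_le_mul_of_nonneg_right (hc i hi) (by positivity)

lemma finrank_span_eig {A : Matrix (Fin m) (Fin m) ℂ} (hA : A.IsHermitian) (s : Finset (Fin m)) :
    Module.finrank ℂ (span ℂ (hA.eigenvectorBasis '' ↑s)) = s.card := by
  classical
  set b := hA.eigenvectorBasis
  have li : LinearIndependent ℂ (fun i : {x // x ∈ s} => b i) :=
    b.orthonormal.linearIndependent.comp _ Subtype.val_injective
  have hr : Set.range (fun i : {x // x ∈ s} => b i) = b '' ↑s := by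
    ext v; simp
  have := finrank_span_eq_card li
  rw [hr] at this
  simpa using this

lemma inf_dim (V W : Submodule ℂ (EuclideanSpace ℂ (Fin m))) :
    Module.finrank ℂ V + Module.finrank ℂ W ≤ m + Module.finrank ℂ ↥(V ⊓ W) := by
  have h1 := Submodule.finrank_sup_add_finrank_inf_eq V W
  have h2 : Module.finrank ℂ ↥(V ⊔ W) ≤ m := by
    simpa [finrank_euclideanSpace_fin] using Submodule.finrank_le (V ⊔ W)
  omega

lemma exists_ne_zero_of_finrank_pos {p : Submodule ℂ (EuclideanSpace ℂ (Fin m))}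
    (h : 0 < Module.finrank ℂ p) : ∃ x ∈ p, x ≠ 0 := by
  by_contra hc
  push_neg at hc
  have : p = ⊥ := by
    ext x; simp only [Submodule.mem_bot]
    exact ⟨fun hx => by by_contra hne; exact hne (hc x hx), fun hx => by simp [hx]⟩
  rw [this, finrank_bot] at h
  omega

open scoped ComplexOrder in
lemma psd_inner (Z : Matrix (Fin m) (Fin k) ℂ) (x : EuclideanSpace ℂ (Fin m)) :
    0 ≤ RCLike.re (inner ℂ x (Matrix.toEuclideanLin (Z * Zᴴ) x) : ℂ) := by
  have h := (Matrix.posSemidef_self_mul_conjTranspose Z).re_dotProduct_nonneg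
    ((WithLp.equiv 2 (Fin m → ℂ)) x)
  have he : (inner ℂ x (Matrix.toEuclideanLin (Z * Zᴴ) x) : ℂ)
      = dotProduct (star ((WithLp.equiv 2 (Fin m → ℂ)) x))
        ((Z * Zᴴ) *ᵥ ((WithLp.equiv 2 (Fin m → ℂ)) x)) := by
    rw [Matrix.toEuclideanLin_apply, PiLp.inner_apply]
    simp only [dotProduct]
    refine Finset.sum_congr rfl fun i _ => ?_
    rw [RCLike.inner_apply, mul_comm]
    rfl
  rw [he]
  exact h

lemma ker_psd_apply (Z : Matrix (Fin m) (Fin k) ℂ) (x : EuclideanSpace ℂ (Fin m))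
    (hx : Matrix.toEuclideanLin Zᴴ x = 0) : Matrix.toEuclideanLin (Z * Zᴴ) x = 0 := by
  have h0 : Zᴴ *ᵥ ((WithLp.equiv 2 (Fin m → ℂ)) x) = 0 := by
    have := congrArg (WithLp.equiv 2 (Fin k → ℂ)) hx
    simpa [Matrix.toEuclideanLin_apply] using this
  rw [Matrix.toEuclideanLin_apply, ← Matrix.mulVec_mulVec, show Zᴴ *ᵥ x.ofLp = 0 from h0, Matrix.mulVec_zero]
  simp

lemma finrank_ker_conjT (Z : Matrix (Fin m) (Fin k) ℂ) :
    m ≤ k + Module.finrank ℂ (LinearMap.ker (Matrix.toEuclideanLin Zᴴ)) := by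
  have h1 := LinearMap.finrank_range_add_finrank_ker (Matrix.toEuclideanLin Zᴴ)
  rw [finrank_euclideanSpace_fin] at h1
  have h2 : Module.finrank ℂ (LinearMap.range (Matrix.toEuclideanLin Zᴴ)) ≤ k := by
    simpa [finrank_euclideanSpace_fin] using
      Submodule.finrank_le (LinearMap.range (Matrix.toEuclideanLin Zᴴ))
  omega

set_option maxHeartbeats 400000 in
theorem stmt3 {m k : ℕ}
    (Y : Matrix (Fin m) (Fin m) ℂ) (hY : Y.IsHermitian)
    (Z : Matrix (Fin m) (Fin k) ℂ) :
    (∀ n : ℕ, 1 ≤ n → n ≤ m →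
      nthEig Y hY n ≤
        nthEig (Y + Z * Zᴴ) (hY.add (Matrix.isHermitian_mul_conjTranspose_self Z)) n) ∧
    (∀ n : ℕ, k < n → n ≤ m →
      nthEig (Y + Z * Zᴴ) (hY.add (Matrix.isHermitian_mul_conjTranspose_self Z)) n ≤
        nthEig Y hY (n - k)) := by
  classical
  set B := Y + Z * Zᴴ with hBdef
  set hB := hY.add (Matrix.isHermitian_mul_conjTranspose_self Z) with hhB
  set μ := hY.eigenvalues with hμ
  set ν := hB.eigenvalues with hν
  set σ := Tuple.sort μ with hσ
  set τ := Tuple.sort ν with hτ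
  have hBapp : ∀ x : EuclideanSpace ℂ (Fin m),
      Matrix.toEuclideanLin B x
        = Matrix.toEuclideanLin Y x + Matrix.toEuclideanLin (Z * Zᴴ) x := by
    intro x
    rw [hBdef, map_add]; rfl
  have hre : ∀ x : EuclideanSpace ℂ (Fin m),
      RCLike.re (inner ℂ x (Matrix.toEuclideanLin B x) : ℂ)
        = RCLike.re (inner ℂ x (Matrix.toEuclideanLin Y x) : ℂ)
          + RCLike.re (inner ℂ x (Matrix.toEuclideanLin (Z * Zᴴ) x) : ℂ) := by
    intro x
    rw [hBapp x, inner_add_right, map_add]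
  constructor
  · intro n h1 h2
    unfold nthEig nthLargest
    rw [dif_pos ⟨h1, h2⟩, dif_pos ⟨h1, h2⟩]
    set a : Fin m := ⟨m - n, by omega⟩ with ha
    set V := span ℂ (hY.eigenvectorBasis '' ↑((Finset.Ici a).image σ)) with hV
    set W := span ℂ (hB.eigenvectorBasis '' ↑((Finset.Iic a).image τ)) with hW
    have hdV : Module.finrank ℂ V = m - (m - n) := by
      rw [hV, finrank_span_eig, Finset.card_image_of_injective _ σ.injective, Fin.card_Ici]
    have hdW : Module.finrank ℂ W = (m - n) + 1 := by
      rw [hW, finrank_span_eig, Finset.card_image_of_injective _ τ.injective, Fin.card_Iic]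
    have hpos : 0 < Module.finrank ℂ ↥(V ⊓ W) := by
      have := inf_dim V W; omega
    obtain ⟨x, hxVW, hx0⟩ := exists_ne_zero_of_finrank_pos hpos
    have hnx : (0:ℝ) < ‖x‖ ^ 2 := pow_pos (norm_pos_iff.mpr hx0) 2
    have hL : μ (σ a) * ‖x‖ ^ 2 ≤ RCLike.re (inner ℂ x (Matrix.toEuclideanLin Y x) : ℂ) := by
      refine ray_ge hY _ _ ?_ x hxVW.1
      intro i hi
      obtain ⟨j, hj, rfl⟩ := Finset.mem_image.1 hi
      exact Tuple.monotone_sort μ (Finset.mem_Ici.1 hj)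
    have hR : RCLike.re (inner ℂ x (Matrix.toEuclideanLin B x) : ℂ) ≤ ν (τ a) * ‖x‖ ^ 2 := by
      refine ray_le hB _ _ ?_ x hxVW.2
      intro i hi
      obtain ⟨j, hj, rfl⟩ := Finset.mem_image.1 hi
      exact Tuple.monotone_sort ν (Finset.mem_Iic.1 hj)
    have hmid := hre x
    have hpsd := psd_inner Z x
    have k1 : RCLike.re (inner ℂ x (Matrix.toEuclideanLin Y x) : ℂ)
        ≤ RCLike.re (inner ℂ x (Matrix.toEuclideanLin B x) : ℂ) := by
      rw [hmid]; exact le_add_of_nonneg_right hpsd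
    exact le_of_mul_le_mul_right (hL.trans (k1.trans hR)) hnx
  · intro n h1 h2
    unfold nthEig nthLargest
    rw [dif_pos ⟨by omega, h2⟩, dif_pos ⟨by omega, by omega⟩]
    set a : Fin m := ⟨m - n, by omega⟩ with ha
    set a' : Fin m := ⟨m - (n - k), by omega⟩ with ha'
    set V := span ℂ (hB.eigenvectorBasis '' ↑((Finset.Ici a).image τ)) with hV
    set U := span ℂ (hY.eigenvectorBasis '' ↑((Finset.Iic a').image σ)) with hU
    set K := LinearMap.ker (Matrix.toEuclideanLin Zᴴ) with hK
    have hdV : Module.finrank ℂ V = m - (m - n) := by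
      rw [hV, finrank_span_eig, Finset.card_image_of_injective _ τ.injective, Fin.card_Ici]
    have hdU : Module.finrank ℂ U = (m - (n - k)) + 1 := by
      rw [hU, finrank_span_eig, Finset.card_image_of_injective _ σ.injective, Fin.card_Iic]
    have hdK : m ≤ k + Module.finrank ℂ K := finrank_ker_conjT Z
    have hpos : 0 < Module.finrank ℂ ↥(V ⊓ U ⊓ K) := by
      have i1 := inf_dim V U
      have i2 := inf_dim (V ⊓ U) K
      omega
    obtain ⟨x, hxm, hx0⟩ := exists_ne_zero_of_finrank_pos hpos
    have hnx : (0:ℝ) < ‖x‖ ^ 2 := pow_pos (norm_pos_iff.mpr hx0) 2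
    have hL : ν (τ a) * ‖x‖ ^ 2 ≤ RCLike.re (inner ℂ x (Matrix.toEuclideanLin B x) : ℂ) := by
      refine ray_ge hB _ _ ?_ x hxm.1.1
      intro i hi
      obtain ⟨j, hj, rfl⟩ := Finset.mem_image.1 hi
      exact Tuple.monotone_sort ν (Finset.mem_Ici.1 hj)
    have hR : RCLike.re (inner ℂ x (Matrix.toEuclideanLin Y x) : ℂ) ≤ μ (σ a') * ‖x‖ ^ 2 := by
      refine ray_le hY _ _ ?_ x hxm.1.2
      intro i hi
      obtain ⟨j, hj, rfl⟩ := Finset.mem_image.1 hi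
      exact Tuple.monotone_sort μ (Finset.mem_Iic.1 hj)
    have hker : Matrix.toEuclideanLin (Z * Zᴴ) x = 0 :=
      ker_psd_apply Z x (LinearMap.mem_ker.1 hxm.2)
    have hmid := hre x
    rw [hker] at hmid
    simp only [inner_zero_right, map_zero, add_zero] at hmid
    exact le_of_mul_le_mul_right (hL.trans (hmid.le.trans hR)) hnx
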